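/- For every integer m ≥ 2 and all positive reals a, b, the SDP divergence D_SDP^(m)(a,b) := max_{t≥0} (1/2^{m-1})·[a(1 − e^{−(m−1)t}) + b·Σ_{r=1}^{m−1} C(m−1,r)(1 − e^{−(m−1−2r)t})] is at most the Hellinger divergence D_GH^(m)(a,b) := (1/2^{m-1})(√a − √b)². -/

import Mathlib

lemma expAddExpNeg (x : ℝ) : 2 ≤ Real.exp x + Real.exp (-x) := by
  have h1 : Real.exp (x/2) * Real.exp (-(x/2)) = 1 := by
    rw [← Real.exp_add]; ring_nf; exact Real.exp_zero
  have h2 : Real.exp (x/2) ^ 2 = Real.exp x := by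
    rw [← Real.exp_add] at *; ring_nf
    rw [sq, ← Real.exp_add]; ring_nf
  have h3 : Real.exp (-(x/2)) ^ 2 = Real.exp (-x) := by
    rw [sq, ← Real.exp_add]; ring_nf
  nlinarith [sq_nonneg (Real.exp (x/2) - Real.exp (-(x/2)))]

lemma amgm (a b x : ℝ) (ha : 0 < a) (hb : 0 < b) :
    2 * Real.sqrt (a*b) ≤ a * Real.exp (-x) + b * Real.exp x := by
  have h1 : Real.sqrt (a*b) = Real.sqrt a * Real.sqrt b := Real.sqrt_mul ha.le b
  have h2 : Real.exp (x/2) * Real.exp (-(x/2)) = 1 := by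
    rw [← Real.exp_add]; ring_nf; exact Real.exp_zero
  have h3 : Real.exp (x/2) ^ 2 = Real.exp x := by rw [sq, ← Real.exp_add]; ring_nf
  have h4 : Real.exp (-(x/2)) ^ 2 = Real.exp (-x) := by rw [sq, ← Real.exp_add]; ring_nf
  have h5 : Real.sqrt a ^ 2 = a := Real.sq_sqrt ha.le
  have h6 : Real.sqrt b ^ 2 = b := Real.sq_sqrt hb.le
  have h7 : Real.sqrt a * Real.sqrt b * (Real.exp (x/2) * Real.exp (-(x/2)))
      = Real.sqrt a * Real.sqrt b := by rw [h2]; ring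
  nlinarith [sq_nonneg (Real.sqrt a * Real.exp (-(x/2)) - Real.sqrt b * Real.exp (x/2))]

lemma sumIccChoose (n : ℕ) : ∑ r ∈ Finset.Icc 1 n, (n.choose r : ℝ) = 2^n - 1 := by
  have h : Finset.range (n+1) = insert 0 (Finset.Icc 1 n) := by
    ext r; simp [Finset.mem_range, Finset.mem_Icc]; omega
  have h2 : ∑ r ∈ Finset.range (n+1), (n.choose r : ℝ) = 2^n := by
    rw [← Nat.cast_sum]; rw [Nat.sum_range_choose]; push_cast; ring
  rw [h, Finset.sum_insert (by simp)] at h2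
  simp at h2 ⊢
  linarith

lemma sumIccChoose' (k : ℕ) : ∑ r ∈ Finset.Icc 1 k, ((k+1).choose r : ℝ) = 2^(k+1) - 2 := by
  have h := sumIccChoose (k+1)
  rw [Finset.sum_Icc_succ_top (by omega : 1 ≤ k + 1)] at h
  simp at h
  linarith

lemma pairing (k : ℕ) (t : ℝ) :
    (2:ℝ)^(k+1) - 2 ≤ ∑ r ∈ Finset.Icc 1 k, (((k+1).choose r : ℝ)) *
      Real.exp ((2*r - ((k:ℝ)+1)) * t) := by
  have hre : ∑ r ∈ Finset.Icc 1 k, (((k+1).choose r : ℝ)) * Real.exp ((2*r - ((k:ℝ)+1)) * t)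
      = ∑ r ∈ Finset.Icc 1 k, (((k+1).choose r : ℝ)) * Real.exp ((((k:ℝ)+1) - 2*r) * t) := by
    apply Finset.sum_nbij' (i := fun r => k + 1 - r) (j := fun r => k + 1 - r)
    · intro r hr; simp [Finset.mem_Icc] at hr ⊢; omega
    · intro r hr; simp [Finset.mem_Icc] at hr ⊢; omega
    · intro r hr; simp [Finset.mem_Icc] at hr ⊢; omega
    · intro r hr; simp [Finset.mem_Icc] at hr ⊢; omega
    · intro r hr
      simp only [Finset.mem_Icc] at hr
      have h1 : (k+1).choose (k + 1 - r) = (k+1).choose r := Nat.choose_symm (by omega)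
      have h2 : ((k + 1 - r : ℕ) : ℝ) = (k:ℝ) + 1 - r := by
        push_cast [Nat.cast_sub (by omega : r ≤ k + 1)]; ring
      rw [h1, h2]
      congr 1
      ring
  have key : ∀ r ∈ Finset.Icc 1 k, 2 * (((k+1).choose r : ℝ)) ≤
      (((k+1).choose r : ℝ)) * Real.exp ((2*r - ((k:ℝ)+1)) * t) +
      (((k+1).choose r : ℝ)) * Real.exp ((((k:ℝ)+1) - 2*r) * t) := by
    intro r hr
    have hc : (0:ℝ) ≤ ((k+1).choose r : ℝ) := by positivity
    have he : Real.exp ((((k:ℝ)+1) - 2*r) * t) = Real.exp (-((2*r - ((k:ℝ)+1)) * t)) := by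
      ring_nf
    rw [he]
    nlinarith [expAddExpNeg ((2*(r:ℝ) - ((k:ℝ)+1)) * t)]
  have h2 := Finset.sum_le_sum key
  rw [← Finset.mul_sum, sumIccChoose' k, Finset.sum_add_distrib, ← hre] at h2
  linarith

theorem stmt1 (m : ℕ) (hm : 2 ≤ m) (a b : ℝ) (ha : 0 < a) (hb : 0 < b) :
    sSup {y : ℝ | ∃ t : ℝ, 0 ≤ t ∧
        y = (1 / 2 ^ (m - 1)) *
          (a * (1 - Real.exp (-((m : ℝ) - 1) * t)) +
            b * ∑ r ∈ Finset.Icc 1 (m - 1),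
              (Nat.choose (m - 1) r : ℝ) * (1 - Real.exp (-(((m : ℝ) - 1) - 2 * r) * t)))}
      ≤ (1 / 2 ^ (m - 1)) * (Real.sqrt a - Real.sqrt b) ^ 2 := by
  apply Real.sSup_le
  · rintro y ⟨t, ht, rfl⟩
    apply mul_le_mul_of_nonneg_left _ (by positivity : (0:ℝ) ≤ 1 / 2 ^ (m-1))
    obtain ⟨k, hk⟩ : ∃ k, m - 1 = k + 1 := ⟨m - 2, by omega⟩
    have hmc : (m:ℝ) - 1 = (k:ℝ) + 1 := by
      have hm2 : m = k + 2 := by omega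
      subst hm2; push_cast; ring
    rw [hk, hmc]
    -- rewrite the sum
    have e1 : ∀ r ∈ Finset.Icc 1 (k+1), ((k+1).choose r : ℝ) *
        (1 - Real.exp (-(((k:ℝ)+1) - 2*r) * t))
        = ((k+1).choose r : ℝ) - ((k+1).choose r : ℝ) * Real.exp ((2*r - ((k:ℝ)+1)) * t) := by
      intro r hr
      have : -(((k:ℝ)+1) - 2*r) * t = (2*r - ((k:ℝ)+1)) * t := by ring
      rw [this]; ring
    rw [Finset.sum_congr rfl e1, Finset.sum_sub_distrib, sumIccChoose (k+1),
      Finset.sum_Icc_succ_top (by omega : 1 ≤ k + 1)]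
    have etop : ((k+1).choose (k+1) : ℝ) * Real.exp ((2*((k:ℝ)+1) - ((k:ℝ)+1)) * t)
        = Real.exp (((k:ℝ)+1) * t) := by
      rw [Nat.choose_self]
      push_cast
      rw [show (2*((k:ℝ)+1) - ((k:ℝ)+1)) * t = ((k:ℝ)+1)*t by ring]
      ring
    rw [show ((2:ℝ)*(((k:ℕ)+1:ℕ):ℝ) - ((k:ℝ)+1)) * t = (2*((k:ℝ)+1) - ((k:ℝ)+1)) * t by push_cast; ring] at *
    rw [etop]
    have hS := pairing k t
    have hAM := amgm a b (((k:ℝ)+1)*t) ha hb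
    have hbS := mul_le_mul_of_nonneg_left hS hb.le
    have hsq : (Real.sqrt a - Real.sqrt b)^2 = a + b - 2*Real.sqrt (a*b) := by
      rw [Real.sqrt_mul ha.le b, sub_sq, Real.sq_sqrt ha.le, Real.sq_sqrt hb.le]; ring
    rw [hsq]
    have hA : Real.exp (-((k:ℝ)+1) * t) = Real.exp (-(((k:ℝ)+1)*t)) := by ring_nf
    rw [hA]
    linarith
  · positivity
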